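/- Let K be a field and let f* ∈ K[X,Y] be a nonzero polynomial whose degree in X is m−1 and whose degree in Y is n−1 (m, n ≥ 1). Assume there are α, β ∈ K^× such that: (1) α^k ≠ 1 and β^k ≠ 1 for every integer 1 ≤ k ≤ 2mn; and (2) f*(α^k, β^k) = 0 for every integer 1 ≤ k ≤ 2mn. Then there exist relatively prime integers c, d with 1 ≤ c ≤ n−1 and 1 ≤ |d| ≤ m−1 such that f*(X^c, X^d) = 0 in the Laurent polynomial ring K[X,X⁻¹] (where f*(X^c,X^d) denotes the image of f* under the K-algebra map K[X,Y] → K[X,X⁻¹] sending X ↦ X^c and Y ↦ X^d). -/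

import Mathlib

open MvPolynomial

open Finset Matrix in
private theorem vandermonde_aux {K : Type*} [Field K] {r N : ℕ} (hrN : r ≤ N) (γ : Fin r → K)
    (hinj : Function.Injective γ) (h0 : ∀ t, γ t ≠ 0) (b : Fin r → K)
    (hb : ∀ k : ℕ, 1 ≤ k → k ≤ N → ∑ t, b t * γ t ^ k = 0) : ∀ t, b t = 0 := by
  classical
  set M : Matrix (Fin r) (Fin r) K := fun k t => γ t ^ ((k : ℕ) + 1) with hM
  have hMeq : M = (Matrix.vandermonde γ)ᵀ * Matrix.diagonal γ := by
    ext k t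
    rw [Matrix.mul_diagonal, Matrix.transpose_apply, Matrix.vandermonde_apply, ← pow_succ]
  have hdet : M.det ≠ 0 := by
    rw [hMeq, Matrix.det_mul, Matrix.det_transpose, Matrix.det_diagonal]
    exact mul_ne_zero (Matrix.det_vandermonde_ne_zero_iff.mpr hinj)
      (Finset.prod_ne_zero_iff.mpr fun t _ => h0 t)
  have hmv : M.mulVec b = 0 := by
    funext k
    have := hb ((k : ℕ) + 1) (by omega) (by have := k.2; omega)
    simpa [Matrix.mulVec, dotProduct, hM, mul_comm] using this
  have := Matrix.eq_zero_of_mulVec_eq_zero hdet hmv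
  exact fun t => congrFun this t

private theorem zpow_ne_one_aux {K : Type*} [Field K] (α : K) (hα : α ≠ 0) (M : ℕ)
    (hroots : ∀ k : ℕ, 1 ≤ k → k ≤ M → α ^ k ≠ 1) :
    ∀ w : ℤ, w ≠ 0 → |w| ≤ (M : ℤ) → (Units.mk0 α hα) ^ w ≠ 1 := by
  intro w hw hbw h1
  set a := Units.mk0 α hα with ha
  have hnat : a ^ (w.natAbs : ℤ) = 1 := by
    rcases le_or_gt 0 w with h | h
    · rwa [Int.natAbs_of_nonneg h]
    · rw [Int.ofNat_natAbs_of_nonpos h.le, zpow_neg, h1, inv_one]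
  rw [zpow_natCast] at hnat
  have : α ^ w.natAbs = 1 := by
    have := congrArg Units.val hnat
    simpa [ha] using this
  have h1' : 1 ≤ w.natAbs := by omega
  have h2' : w.natAbs ≤ M := by
    have := Int.abs_eq_natAbs w
    omega
  exact hroots w.natAbs h1' h2' this

private theorem prop_aux {K : Type*} [Field K] (a b : Kˣ) (m n : ℕ) (hm : 1 ≤ m) (hn : 1 ≤ n)
    (hpα : ∀ w : ℤ, w ≠ 0 → |w| ≤ 2 * (m : ℤ) * n → a ^ w ≠ 1)
    (u v u' v' : ℤ)
    (hr1 : a ^ u * b ^ v = 1) (hr2 : a ^ u' * b ^ v' = 1)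
    (hu : |u| ≤ (m:ℤ) - 1) (hv : |v| ≤ (n:ℤ) - 1)
    (hu' : |u'| ≤ (m:ℤ) - 1) (hv' : |v'| ≤ (n:ℤ) - 1) :
    u * v' = u' * v := by
  by_contra hne
  have e1 : a ^ (u * v') * b ^ (v * v') = 1 := by
    rw [zpow_mul, zpow_mul, ← mul_zpow, hr1, one_zpow]
  have e2 : a ^ (u' * v) * b ^ (v' * v) = 1 := by
    rw [zpow_mul, zpow_mul, ← mul_zpow, hr2, one_zpow]
  have e3 : a ^ (u * v' - u' * v) = 1 := by
    rw [zpow_sub]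
    rw [mul_comm v' v] at e2
    have heq : a ^ (u * v') * b ^ (v * v') = a ^ (u' * v) * b ^ (v * v') := by rw [e1, e2]
    have h4 : a ^ (u * v') = a ^ (u' * v) := mul_right_cancel heq
    rw [h4, mul_inv_cancel]
  refine hpα (u * v' - u' * v) (sub_ne_zero.mpr hne) ?_ e3
  have b1 : |u * v' - u' * v| ≤ |u| * |v'| + |u'| * |v| := by
    calc |u * v' - u' * v| ≤ |u * v'| + |u' * v| := abs_sub _ _
    _ = |u| * |v'| + |u'| * |v| := by rw [abs_mul, abs_mul]
  have hm1 : (1:ℤ) ≤ (m:ℤ) := by exact_mod_cast hm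
  have hn1 : (1:ℤ) ≤ (n:ℤ) := by exact_mod_cast hn
  nlinarith [abs_nonneg u, abs_nonneg v, abs_nonneg u', abs_nonneg v']

private theorem exists_cd_aux (m n : ℕ) (u v : ℤ) (hu0 : u ≠ 0) (hv0 : v ≠ 0)
    (hu : |u| ≤ (m:ℤ) - 1) (hv : |v| ≤ (n:ℤ) - 1) :
    ∃ c d : ℤ, IsCoprime c d ∧ 1 ≤ c ∧ c ≤ (n:ℤ) - 1 ∧ 1 ≤ |d| ∧ |d| ≤ (m:ℤ) - 1 ∧
      ∀ u' v' : ℤ, u * v' = u' * v → c * u' + d * v' = 0 := by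
  set g : ℤ := (Int.gcd u v : ℤ) with hgdef
  have hg0 : 0 < Int.gcd u v := Int.gcd_pos_of_ne_zero_left v hu0
  have hg1 : (1:ℤ) ≤ g := by rw [hgdef]; exact_mod_cast hg0
  set p : ℤ := u / g with hpdef
  set q : ℤ := v / g with hqdef
  have hpu : p * g = u := Int.ediv_mul_cancel (Int.gcd_dvd_left u v)
  have hqv : q * g = v := Int.ediv_mul_cancel (Int.gcd_dvd_right u v)
  have hcop : Int.gcd p q = 1 := Int.gcd_div_gcd_div_gcd hg0
  set ε : ℤ := if 0 < v then 1 else -1 with hεdef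
  have hεabs : ε = 1 ∨ ε = -1 := by rw [hεdef]; split <;> simp
  have hεv : ε * v = |v| := by
    rw [hεdef]; rcases lt_or_ge 0 v with h | h
    · rw [if_pos h, one_mul, abs_of_pos h]
    · rw [if_neg (not_lt.mpr h), abs_of_nonpos h]; ring
  have hcg : (ε * q) * g = |v| := by rw [mul_assoc, hqv, hεv]
  have h2 : |(-(ε * p))| = |p| := by
    rcases hεabs with h | h <;> simp [h, abs_mul]
  have hdg : |p| * g = |u| := by
    calc |p| * g = |p| * |g| := by rw [abs_of_pos (show (0:ℤ) < g by omega)]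
    _ = |p * g| := (abs_mul p g).symm
    _ = |u| := by rw [hpu]
  refine ⟨ε * q, -(ε * p), ?_, ?_, ?_, ?_, ?_, ?_⟩
  · rw [Int.isCoprime_iff_gcd_eq_one]
    have h1 : (ε * q).natAbs = q.natAbs := by
      rcases hεabs with h | h <;> simp [h]
    have h2' : (-(ε * p)).natAbs = p.natAbs := by
      rcases hεabs with h | h <;> simp [h]
    rw [Int.gcd, h1, h2', Nat.gcd_comm]
    exact hcop
  · nlinarith [abs_pos.mpr hv0]
  · nlinarith [abs_pos.mpr hv0]
  · nlinarith [abs_pos.mpr hu0]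
  · nlinarith [abs_pos.mpr hu0, abs_nonneg p]
  · intro u' v' hrel
    have key : q * u' = p * v' := by
      have h1 : (q * u') * g = (p * v') * g := by
        calc (q * u') * g = (q * g) * u' := by ring
        _ = v * u' := by rw [hqv]
        _ = u * v' := by rw [mul_comm v u', hrel]
        _ = (p * g) * v' := by rw [hpu]
        _ = (p * v') * g := by ring
      exact mul_right_cancel₀ (by omega) h1
    calc ε * q * u' + -(ε * p) * v' = ε * (q * u' - p * v') := by ring
    _ = 0 := by rw [key]; ring

/-- Barnes-type lemma: if a nonzero `f* ∈ K[X,Y]` of `X`-degree `m-1` and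
`Y`-degree `n-1` vanishes at `(α^k, β^k)` for `1 ≤ k ≤ 2mn`, where `α, β ∈ K^×`
are not `k`-th roots of unity for any `1 ≤ k ≤ 2mn`, then `f*(X^c, X^d) = 0` in
`K[X, X⁻¹]` for some coprime `c, d` with `1 ≤ c ≤ n-1` and `1 ≤ |d| ≤ m-1`. -/
theorem poly_vanishes_on_powers (K : Type*) [Field K]
    (f : MvPolynomial (Fin 2) K) (hf : f ≠ 0)
    (m n : ℕ) (hm : 1 ≤ m) (hn : 1 ≤ n)
    (hdX : f.degreeOf 0 = m - 1) (hdY : f.degreeOf 1 = n - 1)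
    (α β : K) (hα : α ≠ 0) (hβ : β ≠ 0)
    (hroots : ∀ k : ℕ, 1 ≤ k → k ≤ 2 * m * n → α ^ k ≠ 1 ∧ β ^ k ≠ 1)
    (hzero : ∀ k : ℕ, 1 ≤ k → k ≤ 2 * m * n → eval ![α ^ k, β ^ k] f = 0) :
    ∃ c d : ℤ, IsCoprime c d ∧ 1 ≤ c ∧ c ≤ (n : ℤ) - 1 ∧
      1 ≤ |d| ∧ |d| ≤ (m : ℤ) - 1 ∧
      (aeval ![LaurentPolynomial.T c, LaurentPolynomial.T d] f : LaurentPolynomial K) = 0 := by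
  classical
  set γ : (Fin 2 →₀ ℕ) → K := fun s => α ^ (s 0) * β ^ (s 1) with hγ
  have hγ0 : ∀ s, γ s ≠ 0 := fun s => mul_ne_zero (pow_ne_zero _ hα) (pow_ne_zero _ hβ)
  -- coordinate bounds
  have hbX : ∀ s ∈ f.support, s 0 ≤ m - 1 := fun s hs => by
    have := Finset.le_sup (f := fun m => m 0) hs
    rwa [← degreeOf_eq_sup, hdX] at this
  have hbY : ∀ s ∈ f.support, s 1 ≤ n - 1 := fun s hs => by
    have := Finset.le_sup (f := fun m => m 1) hs
    rwa [← degreeOf_eq_sup, hdY] at this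
  -- eval identity
  have hevalz : ∀ k : ℕ, 1 ≤ k → k ≤ 2 * m * n →
      ∑ s ∈ f.support, f.coeff s * γ s ^ k = 0 := by
    intro k hk1 hk2
    have he : eval ![α ^ k, β ^ k] f = ∑ s ∈ f.support, f.coeff s * γ s ^ k := by
      rw [eval_eq']
      refine Finset.sum_congr rfl fun s _ => ?_
      rw [Fin.prod_univ_two]
      simp only [Matrix.cons_val_zero, Matrix.cons_val_one, Matrix.head_cons, hγ]
      rw [mul_pow, ← pow_mul, ← pow_mul, ← pow_mul, ← pow_mul, Nat.mul_comm k, Nat.mul_comm k]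
    rw [← he]
    exact hzero k hk1 hk2
  -- support card bound
  have hcard : f.support.card ≤ m * n := by
    have hcc : f.support.card ≤ ((Finset.range m) ×ˢ (Finset.range n)).card := by
      apply Finset.card_le_card_of_injOn (fun s => ((s 0 : ℕ), (s 1 : ℕ)))
      · intro s hs
        rw [Finset.mem_coe, Finset.mem_product, Finset.mem_range, Finset.mem_range]; beta_reduce
        exact ⟨by have := hbX s hs; omega, by have := hbY s hs; omega⟩
      · intro s hs s' hs' h
        have h0 : s 0 = s' 0 := congrArg Prod.fst h
        have h1 : s 1 = s' 1 := congrArg Prod.snd h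
        ext i; fin_cases i <;> assumption
    simpa [Finset.card_product] using hcc
  -- fiber sums are zero (Vandermonde step)
  have hS : ∀ g ∈ f.support.image γ,
      ∑ s ∈ f.support.filter (fun s => γ s = g), f.coeff s = 0 := by
    set Γ := f.support.image γ with hΓ
    set r := Γ.card with hr
    have hrN : r ≤ 2 * m * n := by
      have h1 : r ≤ f.support.card := Finset.card_image_le
      nlinarith
    set γ' : Fin r → K := fun t => ((Γ.equivFin.symm t : Γ) : K) with hγ'
    have hγinj : Function.Injective γ' := fun t t' h =>
      Γ.equivFin.symm.injective (Subtype.ext h)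
    have hγ'0 : ∀ t, γ' t ≠ 0 := by
      intro t
      have hmem : (γ' t) ∈ Γ := (Γ.equivFin.symm t).2
      obtain ⟨s, _, hs⟩ := Finset.mem_image.mp hmem
      rw [← hs]; exact hγ0 s
    set b : Fin r → K := fun t => ∑ s ∈ f.support.filter (fun s => γ s = γ' t), f.coeff s
      with hbdef
    have hb : ∀ k : ℕ, 1 ≤ k → k ≤ 2*m*n → ∑ t, b t * γ' t ^ k = 0 := by
      intro k hk1 hk2
      have step1 : ∀ t : Fin r, b t * γ' t ^ k
          = ∑ s ∈ f.support.filter (fun s => γ s = γ' t), f.coeff s * γ s ^ k := by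
        intro t
        rw [hbdef, Finset.sum_mul]
        refine Finset.sum_congr rfl fun s hs => ?_
        rw [(Finset.mem_filter.mp hs).2]
      rw [Finset.sum_congr rfl (fun t _ => step1 t)]
      have step2 : ∑ t : Fin r, ∑ s ∈ f.support.filter (fun s => γ s = γ' t),
            f.coeff s * γ s ^ k
          = ∑ g ∈ Γ, ∑ s ∈ f.support.filter (fun s => γ s = g), f.coeff s * γ s ^ k := by
        rw [← Finset.sum_coe_sort Γ
          (fun g => ∑ s ∈ f.support.filter (fun s => γ s = (g : K)), f.coeff s * γ s ^ k)]
        exact Fintype.sum_equiv Γ.equivFin.symm _ _ (fun t => rfl)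
      rw [step2, Finset.sum_fiberwise_of_maps_to (fun s hs => Finset.mem_image_of_mem γ hs)]
      exact hevalz k hk1 hk2
    have hb0 := vandermonde_aux hrN γ' hγinj hγ'0 b hb
    intro g hg
    have hgeq : g = γ' (Γ.equivFin ⟨g, hg⟩) := by rw [hγ']; simp
    have := hb0 (Γ.equivFin ⟨g, hg⟩)
    rw [hbdef] at this
    simpa [← hgeq] using this
  -- units
  set a : Kˣ := Units.mk0 α hα with ha
  set b' : Kˣ := Units.mk0 β hβ with hb'
  have hpα : ∀ w : ℤ, w ≠ 0 → |w| ≤ 2 * (m:ℤ) * n → a ^ w ≠ 1 := by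
    intro w hw hbw
    refine zpow_ne_one_aux α hα (2*m*n) (fun k h1 h2 => (hroots k h1 h2).1) w hw ?_
    have : ((2*m*n : ℕ) : ℤ) = 2 * (m:ℤ) * n := by push_cast; ring
    omega
  have hpβ : ∀ w : ℤ, w ≠ 0 → |w| ≤ 2 * (m:ℤ) * n → b' ^ w ≠ 1 := by
    intro w hw hbw
    refine zpow_ne_one_aux β hβ (2*m*n) (fun k h1 h2 => (hroots k h1 h2).2) w hw ?_
    have : ((2*m*n : ℕ) : ℤ) = 2 * (m:ℤ) * n := by push_cast; ring
    omega
  have hmn2 : ((n:ℤ) - 1) ≤ 2 * (m:ℤ) * n := by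
    have hm1 : (1:ℤ) ≤ (m:ℤ) := by exact_mod_cast hm
    have hn1 : (1:ℤ) ≤ (n:ℤ) := by exact_mod_cast hn
    nlinarith
  have hmn2' : ((m:ℤ) - 1) ≤ 2 * (m:ℤ) * n := by
    have hm1 : (1:ℤ) ≤ (m:ℤ) := by exact_mod_cast hm
    have hn1 : (1:ℤ) ≤ (n:ℤ) := by exact_mod_cast hn
    nlinarith
  -- relation from equal γ values
  have hrelation : ∀ s1 ∈ f.support, ∀ s2 ∈ f.support, γ s1 = γ s2 →
      a ^ ((s1 0 : ℤ) - (s2 0 : ℤ)) * b' ^ ((s1 1 : ℤ) - (s2 1 : ℤ)) = 1 := by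
    intro s1 hs1 s2 hs2 hγeq
    have hU : a ^ ((s1 0 : ℤ)) * b' ^ ((s1 1 : ℤ)) = a ^ ((s2 0 : ℤ)) * b' ^ ((s2 1 : ℤ)) := by
      apply Units.ext
      rw [hγ] at hγeq
      simpa [zpow_natCast, Units.val_mul, Units.val_pow_eq_pow_val, ha, hb'] using hγeq
    rw [zpow_sub, zpow_sub, ← div_eq_mul_inv, ← div_eq_mul_inv, div_mul_div_comm, div_eq_one]
    exact hU
  -- bounds on differences
  have hdiffX : ∀ s1 ∈ f.support, ∀ s2 ∈ f.support, |(s1 0 : ℤ) - (s2 0 : ℤ)| ≤ (m:ℤ) - 1 := by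
    intro s1 hs1 s2 hs2
    have h1 := hbX s1 hs1
    have h2 := hbX s2 hs2
    rw [abs_le]; constructor <;> omega
  have hdiffY : ∀ s1 ∈ f.support, ∀ s2 ∈ f.support, |(s1 1 : ℤ) - (s2 1 : ℤ)| ≤ (n:ℤ) - 1 := by
    intro s1 hs1 s2 hs2
    have h1 := hbY s1 hs1
    have h2 := hbY s2 hs2
    rw [abs_le]; constructor <;> omega
  -- existence of a colliding pair
  obtain ⟨s, hs, s', hs', hne, hγeq⟩ :
      ∃ s ∈ f.support, ∃ s' ∈ f.support, s ≠ s' ∧ γ s = γ s' := by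
    by_contra hcon
    push_neg at hcon
    apply hf
    have hall : ∀ s ∈ f.support, f.coeff s = 0 := by
      intro s hs
      have hfil : f.support.filter (fun t => γ t = γ s) = {s} := by
        ext t
        simp only [Finset.mem_filter, Finset.mem_singleton]
        constructor
        · rintro ⟨ht, hγt⟩
          by_contra hts
          exact hcon t ht s hs hts hγt
        · rintro rfl; exact ⟨hs, rfl⟩
      have := hS (γ s) (Finset.mem_image_of_mem γ hs)
      rwa [hfil, Finset.sum_singleton] at this
    ext d
    rw [coeff_zero]
    by_cases hd : d ∈ f.support
    · exact hall d hd
    · exact of_not_not (mt mem_support_iff.mpr hd)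
  set u : ℤ := (s 0 : ℤ) - (s' 0 : ℤ) with hudef
  set v : ℤ := (s 1 : ℤ) - (s' 1 : ℤ) with hvdef
  have hrel : a ^ u * b' ^ v = 1 := hrelation s hs s' hs' hγeq
  have hub : |u| ≤ (m:ℤ) - 1 := hdiffX s hs s' hs'
  have hvb : |v| ≤ (n:ℤ) - 1 := hdiffY s hs s' hs'
  have hnz : u ≠ 0 ∧ v ≠ 0 := by
    constructor
    · intro hu0
      have hv0 : v ≠ 0 := by
        intro hv0'
        apply hne
        have e0 : s 0 = s' 0 := by omega
        have e1 : s 1 = s' 1 := by omega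
        ext i
        fin_cases i <;> assumption
      have : b' ^ v = 1 := by
        have := hrel
        rw [hu0, zpow_zero, one_mul] at this
        exact this
      exact hpβ v hv0 (le_trans hvb hmn2) this
    · intro hv0
      have hu0 : u ≠ 0 := by
        intro hu0'
        apply hne
        have e0 : s 0 = s' 0 := by omega
        have e1 : s 1 = s' 1 := by omega
        ext i
        fin_cases i <;> assumption
      have : a ^ u = 1 := by
        have := hrel
        rw [hv0, zpow_zero, mul_one] at this
        exact this
      exact hpα u hu0 (le_trans hub hmn2') this
  obtain ⟨c, d, hco, hc1, hc2, hd1, hd2, horth⟩ :=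
    exists_cd_aux m n u v hnz.1 hnz.2 hub hvb
  refine ⟨c, d, hco, hc1, hc2, hd1, hd2, ?_⟩
  -- perpendicularity on fibers
  have hperp : ∀ s1 ∈ f.support, ∀ s2 ∈ f.support, γ s1 = γ s2 →
      ((s1 0 : ℤ) * c + (s1 1 : ℤ) * d) = ((s2 0 : ℤ) * c + (s2 1 : ℤ) * d) := by
    intro s1 hs1 s2 hs2 hγ12
    have hrel' := hrelation s1 hs1 s2 hs2 hγ12
    have hprop := prop_aux a b' m n hm hn hpα u v
      ((s1 0 : ℤ) - (s2 0 : ℤ)) ((s1 1 : ℤ) - (s2 1 : ℤ)) hrel hrel'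
      hub hvb (hdiffX s1 hs1 s2 hs2) (hdiffY s1 hs1 s2 hs2)
    have := horth _ _ hprop
    linarith
  -- final computation
  rw [aeval_def, eval₂_eq']
  have hterm : ∀ s : Fin 2 →₀ ℕ,
      (∏ i, (![LaurentPolynomial.T c, LaurentPolynomial.T d] :
          Fin 2 → LaurentPolynomial K) i ^ s i)
        = LaurentPolynomial.T ((s 0 : ℤ) * c + (s 1 : ℤ) * d) := by
    intro s
    rw [Fin.prod_univ_two]
    simp only [Matrix.cons_val_zero, Matrix.cons_val_one, Matrix.head_cons]
    rw [LaurentPolynomial.T_pow, LaurentPolynomial.T_pow, ← LaurentPolynomial.T_add]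
  simp only [hterm]
  rw [← Finset.sum_fiberwise_of_maps_to (fun s hs => Finset.mem_image_of_mem γ hs)]
  refine Finset.sum_eq_zero fun g hg => ?_
  obtain ⟨s₀, hs₀, hγ₀⟩ := Finset.mem_image.mp hg
  have hconst : ∀ s1 ∈ f.support.filter (fun s1 => γ s1 = g),
      algebraMap K (LaurentPolynomial K) (f.coeff s1)
          * LaurentPolynomial.T ((s1 0 : ℤ) * c + (s1 1 : ℤ) * d)
        = algebraMap K (LaurentPolynomial K) (f.coeff s1)
          * LaurentPolynomial.T ((s₀ 0 : ℤ) * c + (s₀ 1 : ℤ) * d) := by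
    intro s1 hs1
    obtain ⟨hsmem, hsγ⟩ := Finset.mem_filter.mp hs1
    rw [hperp s1 hsmem s₀ hs₀ (by rw [hsγ, hγ₀])]
  rw [Finset.sum_congr rfl hconst, ← Finset.sum_mul, ← map_sum, hS g hg, map_zero, zero_mul]
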